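/- For distributive functions f, g : Set D → Set D (over union), the relational semantics of R_f ∪ R_g applied to any subset D₀ equals f(D₀) ∪ g(D₀). -/

import Mathlib

def repRel {D : Type*} (f : Set D → Set D) : Option D → Option D → Prop
  | none, none => True
  | none, some d => d ∈ f ∅
  | some d₁, some d₂ => d₂ ∈ f {d₁} ∧ d₂ ∉ f ∅
  | some _, none => False

def relSem {D : Type*} (R : Option D → Option D → Prop) (D₀ : Set D) : Set D :=
  {d | R none (some d) ∨ ∃ d' ∈ D₀, R (some d') (some d)}

lemma distrib_decomp {D : Type*} [Finite D] (f : Set D → Set D)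
    (hf : ∀ X Y : Set D, f (X ∪ Y) = f X ∪ f Y) (D₀ : Set D) (d : D) :
    d ∈ f D₀ ↔ d ∈ f ∅ ∨ ∃ d' ∈ D₀, d ∈ f {d'} := by
  refine Set.Finite.induction_on (motive := fun s _ => d ∈ f s ↔ d ∈ f ∅ ∨ ∃ d' ∈ s, d ∈ f {d'}) D₀ (Set.toFinite D₀) (by simp) ?_
  intro a s _ _ ih
  have : insert a s = {a} ∪ s := Set.insert_eq a s
  rw [this, hf]
  constructor
  · rintro (h | h)
    · exact Or.inr ⟨a, by simp, h⟩
    · rcases ih.mp h with h | ⟨d', hd', h⟩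
      · exact Or.inl h
      · exact Or.inr ⟨d', Or.inr hd', h⟩
  · rintro (h | ⟨d', hd', h⟩)
    · exact Or.inr (ih.mpr (Or.inl h))
    · rcases hd' with rfl | hd'
      · exact Or.inl h
      · exact Or.inr (ih.mpr (Or.inr ⟨d', hd', h⟩))

theorem stmt_5 {D : Type*} [Finite D] (f g : Set D → Set D)
    (hf : ∀ X Y : Set D, f (X ∪ Y) = f X ∪ f Y)
    (hg : ∀ X Y : Set D, g (X ∪ Y) = g X ∪ g Y) (D₀ : Set D) :
    relSem (fun x y => repRel f x y ∨ repRel g x y) D₀ = f D₀ ∪ g D₀ := by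
  ext d
  simp only [relSem, repRel, Set.mem_setOf_eq, Set.mem_union,
    distrib_decomp f hf D₀ d, distrib_decomp g hg D₀ d]
  constructor
  · rintro (h | ⟨d', hd', h⟩)
    · tauto
    · rcases h with ⟨h, _⟩ | ⟨h, _⟩
      · exact Or.inl (Or.inr ⟨d', hd', h⟩)
      · exact Or.inr (Or.inr ⟨d', hd', h⟩)
  · rintro ((h | ⟨d', hd', h⟩) | (h | ⟨d', hd', h⟩))
    · tauto
    · by_cases h0 : d ∈ f ∅
      · tauto
      · exact Or.inr ⟨d', hd', Or.inl ⟨h, h0⟩⟩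
    · tauto
    · by_cases h0 : d ∈ g ∅
      · tauto
      · exact Or.inr ⟨d', hd', Or.inr ⟨h, h0⟩⟩
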